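/- Consider the stationary linear dynamic model Y_t | F_{t−1} ∼ p(y|η_t), X_t = δ + α X_{t−1} + β Y_{t−1}, with δ > 0, α, β ≥ 0, α + β < 1. Setting d_t = Y_t − X_t, the sequence {d_t, t ∈ ℤ} is a martingale difference sequence (E(d_t | F_{t−1}) = 0), and Y_t satisfies the causal ARMA(1,1) recursion Y_t − (α+β)Y_{t−1} = δ + d_t − α d_{t−1}. Moreover, if the stationary variance γ_Y(0) = Var(Y_t) is finite, then the autocovariance function satisfies γ_Y(h) = (α+β)^{h−1} γ_Y(1) for all h ≥ 1. -/

import Mathlib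

open MeasureTheory ProbabilityTheory Filter

/-- The one-parameter exponential family distribution with natural parameter `η`:
the measure with density `y ↦ exp (η y − A η) * h y` with respect to the base measure `μ`. -/
noncomputable def expFam (μ : Measure ℝ) (A h : ℝ → ℝ) (η : ℝ) : Measure ℝ :=
  μ.withDensity fun y => ENNReal.ofReal (Real.exp (η * y - A η) * h y)

/-- The σ-algebra `F_{t−1} = σ{…, X_{t−1}, X_t, …, Y_{t−2}, Y_{t−1}}`. -/
def condField {Ω : Type*} [MeasurableSpace Ω] (X Y : ℤ → Ω → ℝ) (t : ℤ) :
    MeasurableSpace Ω :=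
  MeasurableSpace.comap (fun ω => fun j : ℕ => (X (t - j) ω, Y (t - 1 - j) ω)) inferInstance


lemma memLp_two_condexp_aux {Ω : Type*} {m m0 : MeasurableSpace Ω} (hm : m ≤ m0)
    (μ : Measure Ω) [IsFiniteMeasure μ] {f : Ω → ℝ} (hf : MemLp f 2 μ) :
    MemLp (μ[f|m]) 2 μ := by
  haveI : IsFiniteMeasure (μ.trim hm) := isFiniteMeasure_trim hm
  have hgm : AEStronglyMeasurable[m]
      ((condExpL2 ℝ ℝ hm (hf.toLp f) : Ω →₂[μ] ℝ) : Ω → ℝ) μ :=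
    lpMeas.aestronglyMeasurable _
  have heq : ((condExpL2 ℝ ℝ hm (hf.toLp f) : Ω →₂[μ] ℝ) : Ω → ℝ) =ᵐ[μ] μ[f|m] := by
    refine ae_eq_condExp_of_forall_setIntegral_eq hm (hf.integrable one_le_two)
      (fun s _ _ => ((Lp.memLp _).integrable one_le_two).integrableOn)
      (fun s hs hμs => ?_) hgm
    rw [integral_condExpL2_eq hm (hf.toLp f) hs hμs.ne]
    exact integral_congr_ae (ae_restrict_of_ae hf.coeFn_toLp)
  exact (Lp.memLp _).ae_eq heq

lemma integrable_mul_of_memLp_two {Ω : Type*} {m0 : MeasurableSpace Ω} {μ : Measure Ω}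
    {a b : Ω → ℝ} (ha : MemLp a 2 μ) (hb : MemLp b 2 μ) :
    Integrable (fun ω => a ω * b ω) μ := by
  have h := hb.smul (φ := a) ha (r := 1)
    (hpqr := ⟨by rw [inv_one]; exact ENNReal.inv_two_add_inv_two⟩)
  exact memLp_one_iff_integrable.mp (by exact h)


/-- in the stationary linear dynamic model, `d_t = Y_t − X_t` is a
martingale difference sequence, `Y_t` satisfies the causal ARMA(1,1) recursion
`Y_t − (α+β) Y_{t−1} = δ + d_t − α d_{t−1}`, and if `γ_Y(0) < ∞` then
`γ_Y(h) = (α+β)^{h−1} γ_Y(1)` for all `h ≥ 1`. -/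
theorem stmt14 {Ω : Type*} [MeasurableSpace Ω] (P : Measure Ω) [IsProbabilityMeasure P]
    (μ : Measure ℝ) [SigmaFinite μ] (A hden B : ℝ → ℝ)
    (hB : StrictMono B) (hAB : ∀ η, HasDerivAt A (B η) η)
    (δ α β : ℝ) (hδ : 0 < δ) (hα : 0 ≤ α) (hβ : 0 ≤ β) (hαβ : α + β < 1)
    (X Y : ℤ → Ω → ℝ)
    (hXmeas : ∀ t, Measurable (X t)) (hYmeas : ∀ t, Measurable (Y t))
    (hYnn : ∀ t ω, 0 ≤ Y t ω)
    -- the linear recursion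
    (hrec : ∀ t : ℤ, ∀ ω, X t ω = δ + α * X (t - 1) ω + β * Y (t - 1) ω)
    -- `X_t` is measurable with respect to `F_{t−1}`
    (hadapted : ∀ t : ℤ, Measurable[condField X Y t] (X t))
    -- stationary regime
    (hstat : Measure.map (fun ω => fun t : ℤ => (X (t + 1) ω, Y (t + 1) ω)) P =
      Measure.map (fun ω => fun t : ℤ => (X t ω, Y t ω)) P)
    (hint : ∀ t, Integrable (Y t) P)
    -- the conditional distribution of `Y_t` given `F_{t−1}` is the exponential family
    -- member with mean `X_t`
    (hcdist : ∀ t : ℤ, ∀ᵐ ω ∂P,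
      condDistrib (Y t) (fun ω' => fun j : ℕ => (X (t - j) ω', Y (t - 1 - j) ω')) P
          ((fun j : ℕ => (X (t - j) ω, Y (t - 1 - j) ω))) =
        expFam μ A hden (Function.invFun B (X t ω)))
    -- in particular the conditional mean of `Y_t` given `F_{t−1}` is `X_t`
    (hcm : ∀ t : ℤ, P[Y t|condField X Y t] =ᵐ[P] X t) :
    -- (i) `{d_t}` is a martingale difference sequence
    (∀ t : ℤ, P[fun ω => Y t ω - X t ω|condField X Y t] =ᵐ[P] 0) ∧
    -- (ii) the ARMA(1,1) recursion
    (∀ t : ℤ, ∀ ω, Y t ω - (α + β) * Y (t - 1) ω =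
      δ + (Y t ω - X t ω) - α * (Y (t - 1) ω - X (t - 1) ω)) ∧
    -- (iii) the autocovariance function
    (Integrable (fun ω => (Y 0 ω) ^ 2) P →
      ∀ hlag : ℕ, 1 ≤ hlag →
        ∫ ω, (Y 0 ω - ∫ ω', Y 0 ω' ∂P) * (Y hlag ω - ∫ ω', Y 0 ω' ∂P) ∂P =
          (α + β) ^ (hlag - 1) *
            ∫ ω, (Y 0 ω - ∫ ω', Y 0 ω' ∂P) * (Y 1 ω - ∫ ω', Y 0 ω' ∂P) ∂P) := by
  have hm_le : ∀ t : ℤ, condField X Y t ≤ ‹MeasurableSpace Ω› := fun t =>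
    (measurable_pi_lambda _ fun j => ((hXmeas _).prodMk (hYmeas _))).comap_le
  haveI : ∀ t : ℤ, IsFiniteMeasure (P.trim (hm_le t)) := fun t => isFiniteMeasure_trim _
  have hXint : ∀ t, Integrable (X t) P := fun t => integrable_condExp.congr (hcm t)
  -- (i)
  have part1 : ∀ t : ℤ, P[fun ω => Y t ω - X t ω|condField X Y t] =ᵐ[P] 0 := by
    intro t
    have h2 : P[X t|condField X Y t] = X t :=
      condExp_of_stronglyMeasurable (hm_le t) (hadapted t).stronglyMeasurable (hXint t)
    have h1 : P[Y t - X t|condField X Y t] =ᵐ[P]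
        P[Y t|condField X Y t] - P[X t|condField X Y t] := condExp_sub (hint t) (hXint t) _
    have he : (fun ω => Y t ω - X t ω) = Y t - X t := rfl
    rw [he]
    refine h1.trans ?_
    rw [h2]
    filter_upwards [hcm t] with ω hω
    simp [hω]
  -- (ii)
  have part2 : ∀ t : ℤ, ∀ ω, Y t ω - (α + β) * Y (t - 1) ω =
      δ + (Y t ω - X t ω) - α * (Y (t - 1) ω - X (t - 1) ω) := by
    intro t ω
    rw [hrec t ω]; ring
  refine ⟨part1, part2, ?_⟩
  -- (iii)
  intro hY2 hlag hhlag
  set m : ℝ := ∫ ω', Y 0 ω' ∂P with hm_def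
  -- stationarity: pair laws
  have hpath : Measurable (fun ω => fun t : ℤ => (X t ω, Y t ω)) :=
    measurable_pi_lambda _ fun t => (hXmeas t).prodMk (hYmeas t)
  have hpath' : Measurable (fun ω => fun t : ℤ => (X (t + 1) ω, Y (t + 1) ω)) :=
    measurable_pi_lambda _ fun t => (hXmeas _).prodMk (hYmeas _)
  have hpair : ∀ t : ℤ, Measure.map (fun ω => (X (t + 1) ω, Y (t + 1) ω)) P =
      Measure.map (fun ω => (X t ω, Y t ω)) P := by
    intro t
    have h := congrArg (Measure.map (fun p : ℤ → ℝ × ℝ => p t)) hstat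
    rwa [Measure.map_map (measurable_pi_apply t) hpath',
      Measure.map_map (measurable_pi_apply t) hpath] at h
  have hpair0 : ∀ t : ℤ, Measure.map (fun ω => (X t ω, Y t ω)) P =
      Measure.map (fun ω => (X 0 ω, Y 0 ω)) P := by
    intro t
    induction t using Int.induction_on with
    | zero => rfl
    | succ i ih => rw [← ih]; exact hpair i
    | pred i ih =>
      have h := hpair (-(i : ℤ) - 1)
      have he : (-(i : ℤ) - 1) + 1 = -(i : ℤ) := by ring
      rw [he] at h
      rw [← ih, ← h]
  have hYlaw : ∀ t : ℤ, Measure.map (Y t) P = Measure.map (Y 0) P := by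
    intro t
    have h := congrArg (Measure.map (Prod.snd : ℝ × ℝ → ℝ)) (hpair0 t)
    rwa [Measure.map_map measurable_snd ((hXmeas t).prodMk (hYmeas t)),
      Measure.map_map measurable_snd ((hXmeas 0).prodMk (hYmeas 0))] at h
  -- second moments
  have hY2int : ∀ t : ℤ, Integrable (fun ω => (Y t ω) ^ 2) P := by
    intro t
    have hsq : Measurable (fun y : ℝ => y ^ 2) := measurable_id.pow_const 2
    have h1 : Integrable (fun y : ℝ => y ^ 2) (Measure.map (Y 0) P) :=
      (integrable_map_measure hsq.aestronglyMeasurable (hYmeas 0).aemeasurable).mpr hY2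
    rw [← hYlaw t] at h1
    exact (integrable_map_measure hsq.aestronglyMeasurable (hYmeas t).aemeasurable).mp h1
  have hYL2 : ∀ t : ℤ, MemLp (Y t) 2 P := fun t =>
    (memLp_two_iff_integrable_sq (hYmeas t).aestronglyMeasurable).mpr (hY2int t)
  have hXL2 : ∀ t : ℤ, MemLp (X t) 2 P := fun t =>
    (memLp_two_condexp_aux (hm_le t) P (hYL2 t)).ae_eq (hcm t)
  have hconstL2 : MemLp (fun _ : Ω => m) 2 P := memLp_const m
  -- orthogonality
  have hOrth : ∀ t : ℤ, 1 ≤ t → ∫ ω, (Y 0 ω - m) * (Y t ω - X t ω) ∂P = 0 := by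
    intro t ht
    have hY0m : Measurable[condField X Y t] (Y 0) := by
      have hf : Measurable[condField X Y t]
          (fun ω => fun j : ℕ => (X (t - j) ω, Y (t - 1 - j) ω)) :=
        Measurable.of_comap_le le_rfl
      have h := ((measurable_pi_apply ((t - 1).toNat)).snd).comp hf
      have hidx : t - 1 - ((t - 1).toNat : ℤ) = 0 := by omega
      have h2 : ((fun a : ℕ → ℝ × ℝ => (a ((t - 1).toNat)).2) ∘
          fun ω => fun j : ℕ => (X (t - j) ω, Y (t - 1 - j) ω)) = Y 0 := by
        funext ω
        show Y (t - 1 - ((t - 1).toNat : ℤ)) ω = Y 0 ω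
        rw [hidx]
      exact h2 ▸ h
    have hfsm : StronglyMeasurable[condField X Y t] (fun ω => Y 0 ω - m) :=
      (hY0m.sub measurable_const).stronglyMeasurable
    have hdint : Integrable (fun ω => Y t ω - X t ω) P := (hint t).sub (hXint t)
    have hprod : Integrable (fun ω => (Y 0 ω - m) * (Y t ω - X t ω)) P :=
      integrable_mul_of_memLp_two ((hYL2 0).sub hconstL2) ((hYL2 t).sub (hXL2 t))
    have hpe : (fun ω => (Y 0 ω - m) * (Y t ω - X t ω)) =
        (fun ω => Y 0 ω - m) * (fun ω => Y t ω - X t ω) := rfl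
    have h1 : P[(fun ω => Y 0 ω - m) * (fun ω => Y t ω - X t ω)|condField X Y t] =ᵐ[P] 0 := by
      refine (condExp_mul_of_stronglyMeasurable_left hfsm (hpe ▸ hprod) hdint).trans ?_
      filter_upwards [part1 t] with ω hω
      simp [hω]
    haveI : IsFiniteMeasure (P.trim (hm_le t)) := isFiniteMeasure_trim _
    have h2 : ∫ ω, (P[(fun ω => Y 0 ω - m) * (fun ω => Y t ω - X t ω)|condField X Y t]) ω ∂P =
        ∫ ω, ((fun ω => Y 0 ω - m) * (fun ω => Y t ω - X t ω)) ω ∂P :=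
      integral_condExp (hm_le t)
    rw [hpe, ← h2, integral_congr_ae h1]; simp
  -- one-step covariance recursion
  have hstep : ∀ t : ℤ, 1 ≤ t →
      ∫ ω, (Y 0 ω - m) * (Y (t + 1) ω - m) ∂P =
        (α + β) * ∫ ω, (Y 0 ω - m) * (Y t ω - m) ∂P := by
    intro t ht
    have key : ∀ ω, (Y 0 ω - m) * (Y (t + 1) ω - m) =
        ((α + β) * ((Y 0 ω - m) * (Y t ω - m)) + (δ + (α + β) * m - m) * (Y 0 ω - m)
          + (Y 0 ω - m) * (Y (t + 1) ω - X (t + 1) ω))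
          - α * ((Y 0 ω - m) * (Y t ω - X t ω)) := by
      intro ω
      have h := hrec (t + 1) ω
      have he : t + 1 - 1 = t := by ring
      rw [he] at h
      linear_combination (Y 0 ω - m) * h
    have hA : Integrable (fun ω => (α + β) * ((Y 0 ω - m) * (Y t ω - m))) P :=
      (integrable_mul_of_memLp_two ((hYL2 0).sub hconstL2) ((hYL2 t).sub hconstL2)).const_mul _
    have hB : Integrable (fun ω => (δ + (α + β) * m - m) * (Y 0 ω - m)) P :=
      (((hint 0).sub (integrable_const m)).const_mul _)
    have hC : Integrable (fun ω => (Y 0 ω - m) * (Y (t + 1) ω - X (t + 1) ω)) P :=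
      integrable_mul_of_memLp_two ((hYL2 0).sub hconstL2) ((hYL2 (t + 1)).sub (hXL2 (t + 1)))
    have hD : Integrable (fun ω => α * ((Y 0 ω - m) * (Y t ω - X t ω))) P :=
      (integrable_mul_of_memLp_two ((hYL2 0).sub hconstL2) ((hYL2 t).sub (hXL2 t))).const_mul _
    have hAB2 : Integrable (fun ω => (α + β) * ((Y 0 ω - m) * (Y t ω - m))
        + (δ + (α + β) * m - m) * (Y 0 ω - m)) P := hA.add hB
    have hABC : Integrable (fun ω => (α + β) * ((Y 0 ω - m) * (Y t ω - m))
        + (δ + (α + β) * m - m) * (Y 0 ω - m)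
        + (Y 0 ω - m) * (Y (t + 1) ω - X (t + 1) ω)) P := hAB2.add hC
    have hfun : (fun ω => (Y 0 ω - m) * (Y (t + 1) ω - m)) =
        fun ω => ((α + β) * ((Y 0 ω - m) * (Y t ω - m)) + (δ + (α + β) * m - m) * (Y 0 ω - m)
          + (Y 0 ω - m) * (Y (t + 1) ω - X (t + 1) ω))
          - α * ((Y 0 ω - m) * (Y t ω - X t ω)) := funext key
    have hmean : ∫ ω, (Y 0 ω - m) ∂P = 0 := by
      rw [integral_sub (hint 0) (integrable_const m), integral_const]
      simp [hm_def]
    rw [hfun, integral_sub hABC hD, integral_add hAB2 hC,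
      integral_add hA hB, integral_const_mul, integral_const_mul, integral_const_mul,
      hmean, hOrth (t + 1) (by omega), hOrth t ht]
    ring
  -- iterate
  induction hlag, hhlag using Nat.le_induction with
  | base => simp
  | succ n hn ih =>
    have hcast : ((n + 1 : ℕ) : ℤ) = (n : ℤ) + 1 := by push_cast; ring
    rw [hcast, hstep (n : ℤ) (by exact_mod_cast hn), ih]
    have h3 : (α + β) ^ (n + 1 - 1) = (α + β) * (α + β) ^ (n - 1) := by
      rw [show n + 1 - 1 = (n - 1) + 1 by omega, pow_succ]
      ring
    rw [h3]
    ring
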